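/- An arbitrary product ∏_{i∈I} R_i of a family of commutative rings is a PF-ring if and only if each R_i is a PF-ring. -/

import Mathlib

/-- A commutative ring is a PF-ring if every principal ideal is flat. -/
def IsPFRing (R : Type*) [CommRing R] : Prop :=
  ∀ a : R, Module.Flat R (Ideal.span {a})

lemma flat_span_singleton_iff {R : Type u} [CommRing R] (a : R) :
    Module.Flat R (Ideal.span ({a} : Set R)) ↔
      ∀ s : R, s * a = 0 → ∃ α : R, α * a = 0 ∧ s = s * α := by
  have ha : a ∈ Ideal.span ({a} : Set R) := Ideal.mem_span_singleton_self a
  constructor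
  · intro hflat s hs
    have hrel : ∑ _i : PUnit.{u + 1}, s • (⟨a, ha⟩ : Ideal.span ({a} : Set R)) = 0 := by
      simp only [Finset.sum_const, Finset.card_univ, Fintype.card_punit, one_smul]
      ext
      simpa using hs
    obtain ⟨κ, A, y, h1, h2⟩ :=
      Module.Flat.isTrivialRelation_of_sum_smul_eq_zero (f := fun _ : PUnit.{u + 1} => s) hrel
    choose c hc using fun k => Ideal.mem_span_singleton'.mp (y k).2
    set t : R := ∑ k, A PUnit.unit k * c k with ht
    have hat : a = t * a := by
      have h1' := congrArg (Subtype.val) (h1 PUnit.unit)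
      push_cast at h1'
      calc a = ∑ k, A PUnit.unit k • ((y k : R)) := h1'
        _ = ∑ k, A PUnit.unit k * c k * a := by
            refine Finset.sum_congr rfl fun k _ => ?_
            rw [smul_eq_mul, ← hc k, ← mul_assoc]
        _ = t * a := by rw [ht, Finset.sum_mul]
    have hst : s * t = 0 := by
      rw [ht, Finset.mul_sum]
      refine Finset.sum_eq_zero fun k _ => ?_
      have := h2 k
      simp only [Finset.sum_const, Finset.card_univ, Fintype.card_punit, one_smul,
        Finset.univ_unique, Finset.sum_singleton] at this
      rw [← mul_assoc, this, zero_mul]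
    exact ⟨1 - t, by rw [sub_mul, one_mul, ← hat, sub_self],
      by rw [mul_sub, mul_one, hst, sub_zero]⟩
  · intro h
    apply Module.Flat.of_forall_isTrivialRelation
    intro ι f x hx
    choose c hc using fun i => Ideal.mem_span_singleton'.mp (x i).2
    set s : R := ∑ i, f i * c i with hsdef
    have hsa : s * a = 0 := by
      have := congrArg (Subtype.val) hx
      push_cast at this
      rw [hsdef, Finset.sum_mul, ← this]
      refine Finset.sum_congr rfl fun i _ => ?_
      rw [mul_assoc, hc i, smul_eq_mul]
    obtain ⟨α, hα1, hα2⟩ := h s hsa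
    refine ⟨1, fun i _ => c i * (1 - α), fun _ => ⟨a, ha⟩, ?_, ?_⟩
    · intro i
      ext
      simp only [Finset.univ_unique, Finset.sum_singleton]
      push_cast
      rw [smul_eq_mul, mul_assoc] at *
      rw [sub_mul, one_mul, hα1, sub_zero, hc i]
    · intro _
      simp only [Finset.univ_unique, Finset.sum_singleton]
      calc ∑ i, f i * (c i * (1 - α)) = s * (1 - α) := by
            rw [hsdef, Finset.sum_mul]
            exact Finset.sum_congr rfl fun i _ => (mul_assoc _ _ _).symm
        _ = 0 := by rw [mul_sub, mul_one, ← hα2, sub_self]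

theorem pi_isPFRing_iff {ι : Type*} (R : ι → Type*) [∀ i, CommRing (R i)] :
    IsPFRing (∀ i, R i) ↔ ∀ i, IsPFRing (R i) := by
  classical
  constructor
  · intro h i b
    rw [flat_span_singleton_iff]
    intro s hs
    have := (flat_span_singleton_iff (Pi.single i b)).mp (h (Pi.single i b))
      (Pi.single i s) (by rw [← Pi.single_mul, hs, Pi.single_zero])
    obtain ⟨α, hα1, hα2⟩ := this
    refine ⟨α i, ?_, ?_⟩
    · have := congrFun hα1 i
      simpa using this
    · have := congrFun hα2 i
      simpa using this
  · intro h a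
    rw [flat_span_singleton_iff]
    intro s hs
    have key : ∀ i, ∃ α : R i, α * a i = 0 ∧ s i = s i * α := fun i =>
      (flat_span_singleton_iff (a i)).mp (h i (a i)) (s i) (congrFun hs i)
    choose α hα1 hα2 using key
    exact ⟨α, funext hα1, funext hα2⟩
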